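/- For a buyer c_j in the strong critical ancestor sequence of the winner, removing c_j from the network disconnects strictly more buyers from s than removing the set {c_{j+1}} ∪ M_{c_j c_{j+1}} does; formally, the set of buyers still connected to s after removing {c_{j+1}} ∪ M_{c_j c_{j+1}} contains the set of buyers still connected to s after removing c_j. Consequently, the highest reported valuation among buyers connected without {c_{j+1}} ∪ M_{c_j c_{j+1}} is at least the highest reported valuation among buyers connected without c_j. -/

import Mathlib

/-- The set of buyers still connected to the seller `s` after removing the set `D`:
vertices `y ≠ s`, `y ∉ D`, admitting a walk from `s` avoiding `D`. -/
def remConn {V : Type*} (G : SimpleGraph V) (s : V) (D : Set V) : Set V :=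
  {y | y ≠ s ∧ y ∉ D ∧ ∃ p : G.Walk s y, ∀ d ∈ D, d ∉ p.support}

/-- The highest reported valuation among buyers still connected to `s` after removing `D`
(`0` if there are none). -/
noncomputable def v1 {V : Type*} (G : SimpleGraph V) (s : V) (v : V → ℝ) (D : Set V) : ℝ :=
  sSup (insert 0 (v '' remConn G s D))

/-- `D` is a cut set of buyer `i`: every walk from the seller `s` to `i` meets `D`. -/
def isCutSet {V : Type*} (G : SimpleGraph V) (s i : V) (D : Set V) : Prop :=
  ∀ p : G.Walk s i, ∃ d ∈ D, d ∈ p.support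

/-- `j` is a strong critical ancestor of `i`: `j` is a buyer distinct from `i`
lying on every walk from the seller `s` to `i`. -/
def isSCA {V : Type*} (G : SimpleGraph V) (s i j : V) : Prop :=
  j ≠ i ∧ j ≠ s ∧ ∀ p : G.Walk s i, j ∈ p.support

/-- The critical descendant set of `x`: buyers `y` such that every walk from `s` to `y`
passes through `x`, together with `x` itself. -/
def critDesc {V : Type*} (G : SimpleGraph V) (s x : V) : Set V :=
  {y | ∀ p : G.Walk s y, x ∈ p.support} ∪ {x}

/-- Removing `{c_{j+1}} ∪ M_{c_j c_{j+1}}` (a subset of the critical descendant set of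
`c_j`) disconnects fewer buyers than removing `c_j`: the buyers connected without
`{c_next} ∪ M` include all buyers connected without `c_j`, and consequently the highest
remaining valuation without `{c_next} ∪ M` is at least that without `c_j`. -/
theorem remove_next_set_keeps_more_connected {V : Type*} [Fintype V]
    (G : SimpleGraph V) (s : V) (v : V → ℝ)
    (cj cnext : V) (M : Set V)
    (hdesc : ({cnext} : Set V) ∪ M ⊆ critDesc G s cj) :
    remConn G s {cj} ⊆ remConn G s (({cnext} : Set V) ∪ M) ∧
    v1 G s v {cj} ≤ v1 G s v (({cnext} : Set V) ∪ M) := by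

  have hsub : remConn G s {cj} ⊆ remConn G s (({cnext} : Set V) ∪ M) := by
    rintro y ⟨hys, hycj, p, hp⟩
    have hcjp : cj ∉ p.support := hp cj rfl
    have key : ∀ d ∈ ({cnext} : Set V) ∪ M, d ∉ p.support := by
      intro d hd hdp
      classical
      rcases hdesc hd with h | h
      · exact hcjp (p.support_takeUntil_subset hdp (h (p.takeUntil d hdp)))
      · exact hcjp (h ▸ hdp)
    refine ⟨hys, ?_, p, key⟩
    intro hy
    exact key y hy p.end_mem_support
  refine ⟨hsub, ?_⟩
  apply csSup_le_csSup
  · exact (Set.toFinite _).bddAbove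
  · exact ⟨0, Set.mem_insert 0 _⟩
  · exact Set.insert_subset_insert (Set.image_mono hsub)
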